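/- Suppose A: ℝ → ℝ is twice differentiable with A'' > 0 everywhere, and suppose there exists j with x_j w_j ≠ 0. Then the Shakeout regularizer π(w) = τ ∑_j A(θ_{j−}) + (1−τ) ∑_j A(θ_{j+}) − p·A(θ), viewed as a function of c (through q_j = x_j(w_j + c·sgn(w_j))), is strictly increasing in c > 0. -/

import Mathlib

open Finset

/-- part of Proposition 3: if `A` is twice differentiable with
`A'' > 0` everywhere and some `x j * w j ≠ 0`, then the Shakeout regularizer
`π(w) = τ * ∑ j, A(θ - q_c j) + (1-τ) * ∑ j, A(θ + (τ/(1-τ)) * q_c j) - p * A(θ)`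
(with `q_c j = x j * (w j + c * sgn (w j))`), viewed as a function of `c`,
is strictly increasing on `c > 0`. -/
theorem shakeout_regularizer_strictMono_c (p : ℕ) (w x : Fin p → ℝ) (τ : ℝ)
    (hτ : τ ∈ Set.Ioo (0:ℝ) 1)
    (A A' A'' : ℝ → ℝ)
    (hA : ∀ t, HasDerivAt A (A' t) t)
    (hA' : ∀ t, HasDerivAt A' (A'' t) t)
    (hA'' : ∀ t, 0 < A'' t)
    (hx : ∃ j, x j * w j ≠ 0)
    (θ : ℝ) (hθ : θ = ∑ j, w j * x j) :
    StrictMonoOn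
      (fun c : ℝ =>
        τ * ∑ j, A (θ - x j * (w j + c * Real.sign (w j)))
          + (1 - τ) * ∑ j, A (θ + τ / (1 - τ) * (x j * (w j + c * Real.sign (w j))))
          - (p : ℝ) * A θ)
      (Set.Ioi (0:ℝ)) := by
  obtain ⟨hτ0, hτ1⟩ := hτ
  have h1τ : (0:ℝ) < 1 - τ := by linarith
  set r : ℝ := τ / (1 - τ) with hr
  have hr0 : 0 < r := div_pos hτ0 h1τ
  have hrτ : (1 - τ) * r = τ := by rw [hr]; field_simp
  have hA'mono : StrictMono A' := by
    apply strictMono_of_deriv_pos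
    intro t
    rw [(hA' t).deriv]
    exact hA'' t
  set s : Fin p → ℝ := fun j => x j * Real.sign (w j) with hs
  have hq : ∀ (j : Fin p) (c : ℝ),
      HasDerivAt (fun c : ℝ => x j * (w j + c * Real.sign (w j))) (s j) c := by
    intro j c
    have h0 : HasDerivAt (fun c : ℝ => w j + c * Real.sign (w j)) (Real.sign (w j)) c :=
      (hasDerivAt_mul_const (Real.sign (w j))).const_add (w j)
    exact h0.const_mul (x j)
  have hderiv : ∀ c : ℝ, HasDerivAt (fun c : ℝ =>
        τ * ∑ j, A (θ - x j * (w j + c * Real.sign (w j)))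
          + (1 - τ) * ∑ j, A (θ + τ / (1 - τ) * (x j * (w j + c * Real.sign (w j))))
          - (p : ℝ) * A θ)
      (τ * ∑ j, A' (θ - x j * (w j + c * Real.sign (w j))) * (-(s j))
        + (1 - τ) * ∑ j,
            A' (θ + r * (x j * (w j + c * Real.sign (w j)))) * (r * s j)) c := by
    intro c
    apply HasDerivAt.sub_const
    apply HasDerivAt.add
    · apply HasDerivAt.const_mul
      apply HasDerivAt.fun_sum
      intro j _
      have h1 : HasDerivAt (fun c : ℝ => θ - x j * (w j + c * Real.sign (w j))) (-(s j)) c :=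
        (hq j c).const_sub θ
      exact (hA _).comp c h1
    · apply HasDerivAt.const_mul
      apply HasDerivAt.fun_sum
      intro j _
      have h1 : HasDerivAt (fun c : ℝ => θ + r * (x j * (w j + c * Real.sign (w j))))
          (r * s j) c := ((hq j c).const_mul r).const_add θ
      exact (hA _).comp c h1
  have key : ∀ c : ℝ, 0 < c →
      0 < τ * ∑ j, A' (θ - x j * (w j + c * Real.sign (w j))) * (-(s j))
        + (1 - τ) * ∑ j, A' (θ + r * (x j * (w j + c * Real.sign (w j)))) * (r * s j) := by
    intro c hc
    have heq : τ * ∑ j, A' (θ - x j * (w j + c * Real.sign (w j))) * (-(s j))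
        + (1 - τ) * ∑ j, A' (θ + r * (x j * (w j + c * Real.sign (w j)))) * (r * s j)
        = ∑ j, τ * (s j *
            (A' (θ + r * (x j * (w j + c * Real.sign (w j))))
              - A' (θ - x j * (w j + c * Real.sign (w j))))) := by
      rw [Finset.mul_sum, Finset.mul_sum, ← Finset.sum_add_distrib]
      apply Finset.sum_congr rfl
      intro j _
      have : (1 - τ) * (A' (θ + r * (x j * (w j + c * Real.sign (w j)))) * (r * s j))
          = ((1 - τ) * r) * (A' (θ + r * (x j * (w j + c * Real.sign (w j)))) * s j) := by ring
      rw [this, hrτ]; ring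
    rw [heq]
    have hterm : ∀ j : Fin p, s j ≠ 0 →
        0 < τ * (s j *
          (A' (θ + r * (x j * (w j + c * Real.sign (w j))))
            - A' (θ - x j * (w j + c * Real.sign (w j))))) := by
      intro j hsj
      have hwj : w j ≠ 0 := by
        intro h0
        apply hsj
        simp [hs, h0]
      have hqj : x j * (w j + c * Real.sign (w j)) = s j * (|w j| + c) := by
        have hsgn : Real.sign (w j) * |w j| = w j := by
          rcases hwj.lt_or_gt with h | h
          · rw [Real.sign_of_neg h, abs_of_neg h]; ring
          · rw [Real.sign_of_pos h, abs_of_pos h]; ring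
        simp only [hs]
        linear_combination (-(x j)) * hsgn
      have habs : 0 < |w j| + c := by positivity
      apply mul_pos hτ0
      rcases hsj.lt_or_gt with hneg | hpos
      · have hqneg : x j * (w j + c * Real.sign (w j)) < 0 := by
          rw [hqj]; exact mul_neg_of_neg_of_pos hneg habs
        have : A' (θ + r * (x j * (w j + c * Real.sign (w j))))
            < A' (θ - x j * (w j + c * Real.sign (w j))) := by
          apply hA'mono; nlinarith
        exact mul_pos_of_neg_of_neg hneg (by linarith)
      · have hqpos : 0 < x j * (w j + c * Real.sign (w j)) := by
          rw [hqj]; exact mul_pos hpos habs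
        have : A' (θ - x j * (w j + c * Real.sign (w j)))
            < A' (θ + r * (x j * (w j + c * Real.sign (w j)))) := by
          apply hA'mono; nlinarith
        exact mul_pos hpos (by linarith)
    apply Finset.sum_pos'
    · intro j _
      rcases eq_or_ne (s j) 0 with h | h
      · simp [h]
      · exact (hterm j h).le
    · obtain ⟨j, hj⟩ := hx
      refine ⟨j, Finset.mem_univ j, hterm j ?_⟩
      have hxj : x j ≠ 0 := fun h => hj (by simp [h])
      have hwj : w j ≠ 0 := fun h => hj (by simp [h])
      simp only [hs]
      exact mul_ne_zero hxj (fun h => hwj (Real.sign_eq_zero_iff.mp h))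
  apply strictMonoOn_of_deriv_pos (convex_Ioi 0)
  · exact fun c _ => (hderiv c).continuousAt.continuousWithinAt
  · intro c hc
    rw [interior_Ioi] at hc
    rw [(hderiv c).deriv]
    exact key c hc
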